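/- Let f₁,…,fₙ : ℝ^d → ℝ be differentiable and f = (1/n)∑_{i=1}^n fᵢ. Fix x ∈ ℝ^d and points y₁,…,yₙ ∈ ℝ^d, and set v = (1/n)∑_{i=1}^n ∇fᵢ(yᵢ). Let I = (i₁,…,i_b) be a random batch of size b from {1,…,n} and define the SAGA gradient estimator g̃(I) = (1/b)∑_{j=1}^b (∇f_{i_j}(x) − ∇f_{i_j}(y_{i_j})) + v. Then E‖g̃(I) − ∇f(x)‖² = (1/(bn))∑_{i=1}^n ‖∇fᵢ(x) − ∇fᵢ(yᵢ)‖² − (1/b)‖v − ∇f(x)‖²; in particular E‖g̃(I) − ∇f(x)‖² ≤ (1/(bn))∑_{i=1}^n ‖∇fᵢ(x) − ∇fᵢ(yᵢ)‖². -/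

import Mathlib

open Finset

section aux

variable {E : Type*} [NormedAddCommGroup E] [InnerProductSpace ℝ E]

lemma key_sum {n : ℕ} (W : Fin n → E) (hW : ∑ i, W i = 0) (b : ℕ) :
    (n : ℝ) * ∑ I : Fin b → Fin n, ‖∑ j, W (I j)‖ ^ 2
      = (b : ℝ) * (n : ℝ) ^ b * ∑ i, ‖W i‖ ^ 2 := by
  induction b with
  | zero => simp
  | succ b ih =>
    have e : ∑ I : Fin (b + 1) → Fin n, ‖∑ j, W (I j)‖ ^ 2
        = ∑ p : Fin n × (Fin b → Fin n), ‖W p.1 + ∑ j, W (p.2 j)‖ ^ 2 := by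
      rw [← (Fin.consEquiv fun _ => Fin n).sum_comp fun I => ‖∑ j, W (I j)‖ ^ 2]
      refine Fintype.sum_congr _ _ fun p => ?_
      simp [Fin.consEquiv, Fin.sum_univ_succ]
    have expand : ∀ (a s : E), ‖a + s‖ ^ 2
        = ‖a‖ ^ 2 + 2 * (inner ℝ a s : ℝ) + ‖s‖ ^ 2 := fun a s => norm_add_sq_real a s
    have cross : ∀ s : E, ∑ i : Fin n, (inner ℝ (W i) s : ℝ) = 0 := by
      intro s
      rw [← sum_inner, hW, inner_zero_left]
    have e2 : ∑ p : Fin n × (Fin b → Fin n), ‖W p.1 + ∑ j, W (p.2 j)‖ ^ 2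
        = (n : ℝ) ^ b * ∑ i, ‖W i‖ ^ 2 + (n : ℝ) * ∑ I : Fin b → Fin n, ‖∑ j, W (I j)‖ ^ 2 := by
      rw [Fintype.sum_prod_type]
      have : ∀ i : Fin n, ∑ I : Fin b → Fin n, ‖W i + ∑ j, W (I j)‖ ^ 2
          = (n : ℝ) ^ b * ‖W i‖ ^ 2
            + 2 * ∑ I : Fin b → Fin n, (inner ℝ (W i) (∑ j, W (I j)) : ℝ)
            + ∑ I : Fin b → Fin n, ‖∑ j, W (I j)‖ ^ 2 := by
        intro i
        simp only [expand]
        rw [Finset.sum_add_distrib, Finset.sum_add_distrib, Finset.sum_const,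
          Finset.mul_sum]
        simp [Fintype.card_fun, mul_comm]
      simp only [this]
      rw [Finset.sum_add_distrib, Finset.sum_add_distrib, ← Finset.mul_sum]
      have c0 : ∑ i : Fin n, (2 * ∑ I : Fin b → Fin n, (inner ℝ (W i) (∑ j, W (I j)) : ℝ)) = 0 := by
        rw [← Finset.mul_sum, Finset.sum_comm]
        simp [cross]
      rw [c0]
      have : ∑ _i : Fin n, ∑ I : Fin b → Fin n, ‖∑ j, W (I j)‖ ^ 2
          = (n : ℝ) * ∑ I : Fin b → Fin n, ‖∑ j, W (I j)‖ ^ 2 := by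
        rw [Finset.sum_const]
        simp [mul_comm]
      rw [this]
      ring
    rw [e, e2, mul_add, ih]
    push_cast
    ring

end aux

/-- Error identity and bound for the SAGA gradient estimator.
`f = (1/n) ∑ᵢ fᵢ`, `v = (1/n) ∑ᵢ ∇fᵢ(yᵢ)`, and for a batch `I = (i₁, …, i_b)` of indices drawn
independently and uniformly from `{1, …, n}` (expectation = average over all `n^b` tuples),
`g̃(I) = (1/b) ∑ⱼ (∇f_{iⱼ}(x) − ∇f_{iⱼ}(y_{iⱼ})) + v`. Then
`E ‖g̃(I) − ∇f(x)‖² = (1/(bn)) ∑ᵢ ‖∇fᵢ(x) − ∇fᵢ(yᵢ)‖² − (1/b) ‖v − ∇f(x)‖²`, and in particular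
`E ‖g̃(I) − ∇f(x)‖² ≤ (1/(bn)) ∑ᵢ ‖∇fᵢ(x) − ∇fᵢ(yᵢ)‖²`. -/
theorem stmt_1 (d n b : ℕ) (hn : 0 < n) (hb : 0 < b)
    (f : Fin n → EuclideanSpace ℝ (Fin d) → ℝ)
    (hf : ∀ i, Differentiable ℝ (f i))
    (F : EuclideanSpace ℝ (Fin d) → ℝ)
    (hF : F = fun w => (1 / (n : ℝ)) * ∑ i, f i w)
    (x : EuclideanSpace ℝ (Fin d)) (y : Fin n → EuclideanSpace ℝ (Fin d))
    (v : EuclideanSpace ℝ (Fin d))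
    (hv : v = (1 / (n : ℝ)) • ∑ i, gradient (f i) (y i))
    (g : (Fin b → Fin n) → EuclideanSpace ℝ (Fin d))
    (hg : ∀ I : Fin b → Fin n,
      g I = (1 / (b : ℝ)) •
          (∑ j, (gradient (f (I j)) x - gradient (f (I j)) (y (I j)))) + v) :
    (1 / (n : ℝ) ^ b) * ∑ I : Fin b → Fin n, ‖g I - gradient F x‖ ^ 2 =
        (1 / ((b : ℝ) * (n : ℝ))) *
            ∑ i, ‖gradient (f i) x - gradient (f i) (y i)‖ ^ 2 -
          (1 / (b : ℝ)) * ‖v - gradient F x‖ ^ 2 ∧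
      (1 / (n : ℝ) ^ b) * ∑ I : Fin b → Fin n, ‖g I - gradient F x‖ ^ 2 ≤
        (1 / ((b : ℝ) * (n : ℝ))) *
          ∑ i, ‖gradient (f i) x - gradient (f i) (y i)‖ ^ 2 := by
  have hn' : (n : ℝ) ≠ 0 := Nat.cast_ne_zero.mpr hn.ne'
  have hb' : (b : ℝ) ≠ 0 := Nat.cast_ne_zero.mpr hb.ne'
  set Z : Fin n → EuclideanSpace ℝ (Fin d) :=
    fun i => gradient (f i) x - gradient (f i) (y i) with hZ
  set μ : EuclideanSpace ℝ (Fin d) := (1 / (n : ℝ)) • ∑ i, Z i with hμ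
  -- gradient of F
  have hgradF : gradient F x = (1 / (n : ℝ)) • ∑ i, gradient (f i) x := by
    have hfd : HasFDerivAt F ((1 / (n : ℝ)) • ∑ i, fderiv ℝ (f i) x) x := by
      rw [hF]
      exact (HasFDerivAt.fun_sum fun i _ => ((hf i) x).hasFDerivAt).const_mul _
    unfold gradient
    rw [hfd.fderiv, map_smul, map_sum]
  have hvF : v - gradient F x = -μ := by
    rw [hv, hgradF, hμ, hZ, ← smul_sub, ← smul_neg]
    congr 1
    rw [← Finset.sum_sub_distrib, ← Finset.sum_neg_distrib]
    exact Finset.sum_congr rfl fun i _ => by abel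
  set W : Fin n → EuclideanSpace ℝ (Fin d) := fun i => Z i - μ with hWdef
  have hsumZ : ∑ i, Z i = (n : ℝ) • μ := by
    rw [hμ, smul_smul]
    rw [mul_one_div, div_self hn', one_smul]
  have hW : ∑ i, W i = 0 := by
    rw [hWdef]
    simp only [Finset.sum_sub_distrib, Finset.sum_const, Finset.card_univ, Fintype.card_fin,
      hsumZ, ← Nat.cast_smul_eq_nsmul ℝ, sub_self]
  have hgI : ∀ I : Fin b → Fin n, g I - gradient F x = (1 / (b : ℝ)) • ∑ j, W (I j) := by
    intro I
    have : ∑ j, W (I j) = (∑ j, Z (I j)) - (b : ℝ) • μ := by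
      rw [hWdef]
      simp [Finset.sum_sub_distrib, Finset.card_univ, ← Nat.cast_smul_eq_nsmul ℝ]
    rw [this, smul_sub, smul_smul, one_div, inv_mul_cancel₀ hb', one_smul,
      hg I, hZ]
    rw [add_sub_assoc, hvF]
    simp only [one_div]
    abel
  have hnorm : ∀ I : Fin b → Fin n,
      ‖g I - gradient F x‖ ^ 2 = (1 / (b : ℝ)) ^ 2 * ‖∑ j, W (I j)‖ ^ 2 := by
    intro I
    rw [hgI I, norm_smul, mul_pow, Real.norm_eq_abs,
      abs_of_nonneg (by positivity : (0:ℝ) ≤ 1 / (b : ℝ))]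
  have hkey := key_sum W hW b
  -- compute ∑ ‖W i‖²
  have hT : ∑ i, ‖W i‖ ^ 2 = (∑ i, ‖Z i‖ ^ 2) - (n : ℝ) * ‖μ‖ ^ 2 := by
    have expand : ∀ i, ‖W i‖ ^ 2 = ‖Z i‖ ^ 2 - 2 * (inner ℝ (Z i) μ : ℝ) + ‖μ‖ ^ 2 :=
      fun i => norm_sub_sq_real (Z i) μ
    have hinner : ∑ i, (inner ℝ (Z i) μ : ℝ) = (n : ℝ) * ‖μ‖ ^ 2 := by
      rw [← sum_inner, hsumZ, real_inner_smul_left, real_inner_self_eq_norm_sq]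
    simp only [expand]
    rw [Finset.sum_add_distrib, Finset.sum_sub_distrib, ← Finset.mul_sum, hinner,
      Finset.sum_const, Finset.card_univ, Fintype.card_fin, nsmul_eq_mul]
    ring
  have hμnorm : ‖v - gradient F x‖ ^ 2 = ‖μ‖ ^ 2 := by rw [hvF, norm_neg]
  have hLHS : (1 / (n : ℝ) ^ b) * ∑ I : Fin b → Fin n, ‖g I - gradient F x‖ ^ 2
      = (1 / ((b : ℝ) * (n : ℝ))) * ∑ i, ‖W i‖ ^ 2 := by
    simp only [hnorm]
    rw [← Finset.mul_sum]
    have hS : (∑ I : Fin b → Fin n, ‖∑ j, W (I j)‖ ^ 2)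
        = (b : ℝ) * (n : ℝ) ^ b * (∑ i, ‖W i‖ ^ 2) / (n : ℝ) := by
      rw [eq_div_iff hn']
      linarith [hkey]
    rw [hS]
    field_simp
  have main : (1 / (n : ℝ) ^ b) * ∑ I : Fin b → Fin n, ‖g I - gradient F x‖ ^ 2 =
      (1 / ((b : ℝ) * (n : ℝ))) * ∑ i, ‖Z i‖ ^ 2 - (1 / (b : ℝ)) * ‖v - gradient F x‖ ^ 2 := by
    have h2 : (1 / ((b : ℝ) * n)) * ((n : ℝ) * ‖μ‖ ^ 2) = (1 / (b : ℝ)) * ‖μ‖ ^ 2 := by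
      field_simp
    rw [hLHS, hT, hμnorm, mul_sub, h2]
  refine ⟨main, ?_⟩
  rw [main]
  have : 0 ≤ (1 / (b : ℝ)) * ‖v - gradient F x‖ ^ 2 := by positivity
  linarith
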